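/- Let A be a real number, let c be a real number with 0 < c < 1, and let k be a nonnegative integer. Then for every ζ > 0, the k-th derivative at ζ of the function ζ ↦ exp(-A·ζ^c) equals exp(-A·ζ^c) · Σ_{l=0}^{k} (1/l!) · Σ_{j=0}^{l} (-1)^{l+j} · C(l,j) · A^l · (c(l-j))_{(k)} · ζ^{c·l - k}. -/

import Mathlib

open Finset Polynomial

-- Lemma A: sum with factor j
lemma lemA (f : ℕ → ℝ) (l : ℕ) :
    ∑ j ∈ Finset.range (l + 2),
        (-1 : ℝ) ^ (l + 1 + j) * (((l+1).choose j : ℕ) : ℝ) * (j : ℝ) * f (l + 1 - j)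
      = ((l : ℝ) + 1) * ∑ j ∈ Finset.range (l + 1),
          (-1 : ℝ) ^ (l + j) * ((l.choose j : ℕ) : ℝ) * f (l - j) := by
  rw [Finset.sum_range_succ', Finset.mul_sum]
  simp only [Nat.cast_zero, mul_zero, zero_mul, add_zero]
  refine Finset.sum_congr rfl fun j hj => ?_
  have hch : (((l+1).choose (j+1) : ℕ) : ℝ) * ((j:ℝ)+1) = ((l:ℝ)+1) * (l.choose j : ℕ) := by
    have := Nat.add_one_mul_choose_eq l j
    have := congrArg (Nat.cast : ℕ → ℝ) this
    push_cast at this ⊢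
    linarith [this]
  have hpow : (-1 : ℝ) ^ (l + 1 + (j + 1)) = (-1 : ℝ) ^ (l + j) := by
    have : l + 1 + (j + 1) = (l + j) + 2 := by ring
    rw [this, pow_add]; norm_num
  have harg : l + 1 - (j + 1) = l - j := by omega
  rw [hpow, harg]
  push_cast
  linear_combination ((-1:ℝ)^(l+j) * f (l-j)) * hch
lemma fwdDiff_polyeval (p : ℝ[X]) :
    fwdDiff (1:ℝ) (fun x => p.eval x) = fun x => (p.comp (X + C 1) - p).eval x := by
  funext x
  simp [fwdDiff, eval_comp]

lemma iter_fwdDiff_poly : ∀ (l : ℕ) (p : ℝ[X]), p.degree < l →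
    (fwdDiff (1:ℝ))^[l] (fun x => p.eval x) = fun _ => 0 := by
  intro l
  induction l with
  | zero =>
    intro p hp
    have : p = 0 := by
      rw [← Polynomial.degree_eq_bot]
      simpa using hp
    simp [this]
  | succ l IH =>
    intro p hp
    rw [Function.iterate_succ_apply, fwdDiff_polyeval]
    set q : ℝ[X] := p.comp (X + C 1) - p with hq
    apply IH
    by_cases hp0 : p = 0
    · have : q = 0 := by simp [hq, hp0]
      rw [this]
      rw [Polynomial.degree_zero]; exact_mod_cast WithBot.bot_lt_coe l
    by_cases hpc : p.degree ≤ 0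
    · have hcp : p.comp (X + C 1) = p := by
        conv_lhs => rw [Polynomial.eq_C_of_degree_le_zero hpc]
        rw [Polynomial.eq_C_of_degree_le_zero hpc]
        simp
      have : q = 0 := by rw [hq, hcp, sub_self]
      rw [this]
      rw [Polynomial.degree_zero]; exact_mod_cast WithBot.bot_lt_coe l
    · have hnd : (X + C (1:ℝ)).natDegree = 1 := Polynomial.natDegree_X_add_C 1
      have hlc : (p.comp (X + C 1)).leadingCoeff = p.leadingCoeff := by
        rw [Polynomial.leadingCoeff_comp (by rw [hnd]; exact one_ne_zero)]
        rw [(Polynomial.monic_X_add_C (1:ℝ)).leadingCoeff, one_pow, mul_one]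
      have hcomp0 : p.comp (X + C 1) ≠ 0 := by
        intro h
        apply hp0
        rw [← Polynomial.leadingCoeff_eq_zero, ← hlc, h, Polynomial.leadingCoeff_zero]
      have hndeq : (p.comp (X + C 1)).natDegree = p.natDegree := by
        rw [Polynomial.natDegree_comp, hnd, mul_one]
      have hdeq : (p.comp (X + C 1)).degree = p.degree := by
        rw [Polynomial.degree_eq_natDegree hcomp0, Polynomial.degree_eq_natDegree hp0, hndeq]
      have hqlt : q.degree < p.degree := by
        have := Polynomial.degree_sub_lt hdeq hcomp0 hlc
        rwa [hdeq] at this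
      have hple : p.natDegree ≤ l := by
        have : (p.natDegree : WithBot ℕ) < ((l+1 : ℕ) : WithBot ℕ) := by
          rw [← Polynomial.degree_eq_natDegree hp0]; exact_mod_cast hp
        exact Nat.lt_succ_iff.mp (by exact_mod_cast this)
      calc q.degree < p.degree := hqlt
        _ = (p.natDegree : WithBot ℕ) := Polynomial.degree_eq_natDegree hp0
        _ ≤ (l : WithBot ℕ) := by exact_mod_cast hple
lemma neg_one_pow_nat_sub (l j : ℕ) (h : j ≤ l) :
    (-1 : ℝ) ^ (l - j) = (-1) ^ l * (-1) ^ j := by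
  have : l - j + j = l := Nat.sub_add_cancel h
  have h2 : (-1 : ℝ) ^ (l - j) * (-1) ^ j = (-1) ^ l := by
    rw [← pow_add, this]
  have h3 : ((-1 : ℝ) ^ j) * ((-1:ℝ)^j) = 1 := by
    rw [← pow_add, ← two_mul, pow_mul]; norm_num
  calc (-1 : ℝ) ^ (l - j) = (-1 : ℝ) ^ (l - j) * (((-1:ℝ)^j) * ((-1:ℝ)^j)) := by rw [h3]; ring
    _ = (-1:ℝ)^l * (-1)^j := by rw [← mul_assoc, h2]

lemma lemB (p : ℝ[X]) (l : ℕ) (hdeg : p.degree < l) :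
    ∑ j ∈ Finset.range (l + 1), (-1 : ℝ) ^ (l + j) * (l.choose j : ℝ) * p.eval ((l : ℝ) - j) = 0 := by
  -- the iterated forward difference of p at 0 vanishes
  have h0 : (fwdDiff (1:ℝ))^[l] (fun x => p.eval x) 0 = 0 := by
    rw [iter_fwdDiff_poly l p hdeg]
  rw [fwdDiff_iter_eq_sum_shift] at h0
  have h0' : ∑ m ∈ Finset.range (l + 1), (-1 : ℝ) ^ m * (l.choose m : ℝ) * p.eval (m : ℝ) = 0 := by
    have hml : ∀ m ∈ Finset.range (l+1),
        (((-1 : ℤ) ^ (l - m) * (l.choose m : ℤ)) • p.eval ((0:ℝ) + m • (1:ℝ)))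
          = (-1:ℝ)^l * ((-1 : ℝ) ^ m * (l.choose m : ℝ) * p.eval (m : ℝ)) := by
      intro m hm
      have hm' : m ≤ l := Nat.lt_succ_iff.mp (Finset.mem_range.mp hm)
      rw [zsmul_eq_mul]
      push_cast
      rw [neg_one_pow_nat_sub l m hm']
      ring_nf
    rw [Finset.sum_congr rfl hml, ← Finset.mul_sum] at h0
    rcases mul_eq_zero.mp h0 with h | h
    · exact absurd h (pow_ne_zero l (by norm_num))
    · exact h
  -- reflect the sum
  have := Finset.sum_range_reflect
    (fun j => (-1 : ℝ) ^ (l + j) * (l.choose j : ℝ) * p.eval ((l : ℝ) - j)) (l+1)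
  rw [← this]
  rw [← h0']
  refine Finset.sum_congr rfl fun j hj => ?_
  have hj' : j ≤ l := Nat.lt_succ_iff.mp (Finset.mem_range.mp hj)
  have e1 : l + 1 - 1 - j = l - j := by omega
  have hsq : (-1:ℝ)^l * (-1:ℝ)^l = 1 := by
    rw [← pow_add, ← two_mul, pow_mul]; norm_num
  rw [e1, Nat.choose_symm hj', pow_add, neg_one_pow_nat_sub l j hj', Nat.cast_sub hj',
    sub_sub_cancel]
  linear_combination ((-1:ℝ)^j * (l.choose j : ℝ) * p.eval (j:ℝ)) * hsq
noncomputable def Ssum (A c : ℝ) (k l : ℕ) : ℝ :=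
  ∑ j ∈ Finset.range (l + 1),
    (-1 : ℝ) ^ (l + j) * (l.choose j : ℝ) * A ^ l *
      (descPochhammer ℝ k).eval (c * ((l : ℝ) - (j : ℝ)))

noncomputable def Bco (A c : ℝ) (k l : ℕ) : ℝ := (1 / (l.factorial : ℝ)) * Ssum A c k l

-- vanishing of S at l > k
lemma Ssum_eq_zero (A c : ℝ) (k l : ℕ) (h : k < l) : Ssum A c k l = 0 := by
  unfold Ssum
  set p : ℝ[X] := (descPochhammer ℝ k).comp (C c * X) with hp
  have hev : ∀ x : ℝ, p.eval x = (descPochhammer ℝ k).eval (c * x) := by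
    intro x; rw [hp]; simp [eval_comp]
  have hdeg : p.degree < l := by
    have h1 : p.natDegree ≤ k := by
      rw [hp, Polynomial.natDegree_comp, descPochhammer_natDegree]
      have : (C c * X : ℝ[X]).natDegree ≤ 1 := by
        apply Polynomial.natDegree_mul_le.trans
        simp
      exact (Nat.mul_le_mul_left k this).trans (by omega)
    calc p.degree ≤ (p.natDegree : WithBot ℕ) := Polynomial.degree_le_natDegree
      _ ≤ (k : WithBot ℕ) := by exact_mod_cast h1
      _ < (l : WithBot ℕ) := by exact_mod_cast h
  have hz := lemB p l hdeg
  calc ∑ j ∈ Finset.range (l + 1), (-1 : ℝ) ^ (l + j) * (l.choose j : ℝ) * A ^ l *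
        (descPochhammer ℝ k).eval (c * ((l : ℝ) - (j : ℝ)))
      = A ^ l * ∑ j ∈ Finset.range (l + 1),
          (-1 : ℝ) ^ (l + j) * (l.choose j : ℝ) * p.eval ((l : ℝ) - j) := by
        rw [Finset.mul_sum]
        refine Finset.sum_congr rfl fun j hj => ?_
        rw [hev]
        ring
    _ = 0 := by rw [hz, mul_zero]
lemma Bco_eq_zero (A c : ℝ) (k l : ℕ) (h : k < l) : Bco A c k l = 0 := by
  rw [Bco, Ssum_eq_zero A c k l h, mul_zero]

-- recurrence, l = 0
lemma Ssum_succ_zero (A c : ℝ) (k : ℕ) :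
    Ssum A c (k+1) 0 = Ssum A c k 0 * (c * 0 - k) := by
  unfold Ssum
  rw [Finset.sum_range_one, Finset.sum_range_one, descPochhammer_succ_right]
  simp only [Polynomial.eval_mul, Polynomial.eval_sub, Polynomial.eval_X, Polynomial.eval_natCast]
  ring

-- recurrence, successor
lemma Ssum_succ_succ (A c : ℝ) (k l : ℕ) :
    Ssum A c (k+1) (l+1)
      = Ssum A c k (l+1) * (c * ((l:ℝ)+1) - k) - c * A * ((l:ℝ)+1) * Ssum A c k l := by
  have hsplit : ∀ j ∈ Finset.range (l+2),
      (-1 : ℝ) ^ (l+1+j) * ((l+1).choose j : ℝ) * A ^ (l+1) *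
          (descPochhammer ℝ (k+1)).eval (c * (((l:ℝ)+1) - j))
        = ((-1 : ℝ) ^ (l+1+j) * ((l+1).choose j : ℝ) * A ^ (l+1) *
            (descPochhammer ℝ k).eval (c * (((l:ℝ)+1) - j))) * (c * ((l:ℝ)+1) - k)
          - c * A * ((-1 : ℝ) ^ (l+1+j) * ((l+1).choose j : ℝ) * (j:ℝ) * (A ^ l *
            (descPochhammer ℝ k).eval (c * (((l:ℝ)+1) - j)))) := by
    intro j hj
    rw [descPochhammer_succ_right]
    simp only [Polynomial.eval_mul, Polynomial.eval_sub, Polynomial.eval_X,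
      Polynomial.eval_natCast]
    ring
  unfold Ssum
  push_cast
  rw [Finset.sum_congr rfl hsplit, Finset.sum_sub_distrib, ← Finset.mul_sum]
  congr 1
  · rw [Finset.sum_mul]
  · -- apply lemA
    have hcast : ∀ j ∈ Finset.range (l+2),
        (-1 : ℝ) ^ (l+1+j) * ((l+1).choose j : ℝ) * (j:ℝ) * (A ^ l *
            (descPochhammer ℝ k).eval (c * (((l:ℝ)+1) - j)))
          = (-1 : ℝ) ^ (l+1+j) * ((l+1).choose j : ℝ) * (j:ℝ) *
              ((fun m : ℕ => A ^ l * (descPochhammer ℝ k).eval (c * (m:ℝ))) (l+1-j)) := by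
      intro j hj
      have hj' : j ≤ l + 1 := Nat.lt_succ_iff.mp (Finset.mem_range.mp hj)
      simp only []
      rw [Nat.cast_sub hj']
      push_cast
      ring_nf
    rw [Finset.sum_congr rfl hcast,
      lemA (fun m : ℕ => A ^ l * (descPochhammer ℝ k).eval (c * (m:ℝ))) l]
    have hback : ∀ j ∈ Finset.range (l+1),
        (-1 : ℝ) ^ (l+j) * ((l.choose j : ℕ) : ℝ) *
            ((fun m : ℕ => A ^ l * (descPochhammer ℝ k).eval (c * (m:ℝ))) (l-j))
          = (-1 : ℝ) ^ (l+j) * (l.choose j : ℝ) * A ^ l *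
              (descPochhammer ℝ k).eval (c * ((l:ℝ) - j)) := by
      intro j hj
      have hj' : j ≤ l := Nat.lt_succ_iff.mp (Finset.mem_range.mp hj)
      simp only []
      rw [Nat.cast_sub hj']
      ring
    rw [Finset.sum_congr rfl hback]
    ring

lemma Bco_succ_zero (A c : ℝ) (k : ℕ) : Bco A c (k+1) 0 = Bco A c k 0 * (c * 0 - k) := by
  unfold Bco
  rw [Ssum_succ_zero]
  ring

lemma Bco_succ_succ (A c : ℝ) (k l : ℕ) :
    Bco A c (k+1) (l+1)
      = -(A*c) * Bco A c k l + Bco A c k (l+1) * (c * ((l:ℝ)+1) - k) := by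
  unfold Bco
  rw [Ssum_succ_succ, Nat.factorial_succ]
  have h1 : (l.factorial : ℝ) ≠ 0 := Nat.cast_ne_zero.mpr l.factorial_ne_zero
  have h2 : ((l:ℝ) + 1) ≠ 0 := by positivity
  push_cast
  field_simp
  ring

lemma key7 (A c : ℝ) (k : ℕ) (z : ℝ) (hz : 0 < z) :
    ∑ l ∈ Finset.range (k + 2), Bco A c (k+1) l * z ^ (c * (l:ℝ) - ((k:ℝ)+1))
      = -(A * (c * z ^ (c-1))) * ∑ l ∈ Finset.range (k + 1), Bco A c k l * z ^ (c * (l:ℝ) - (k:ℝ))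
        + ∑ l ∈ Finset.range (k + 1),
            Bco A c k l * ((c * (l:ℝ) - (k:ℝ)) * z ^ (c * (l:ℝ) - (k:ℝ) - 1)) := by
  have hzz : ∀ x y : ℝ, z ^ x * z ^ y = z ^ (x + y) := fun x y => (Real.rpow_add hz x y).symm
  -- first RHS term, rewritten as a sum
  have hfirst : -(A * (c * z ^ (c-1))) * ∑ l ∈ Finset.range (k + 1),
        Bco A c k l * z ^ (c * (l:ℝ) - (k:ℝ))
      = ∑ l ∈ Finset.range (k + 1),
          (-(A*c) * Bco A c k l) * z ^ (c * ((l:ℝ)+1) - ((k:ℝ)+1)) := by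
    rw [Finset.mul_sum]
    refine Finset.sum_congr rfl fun l hl => ?_
    have : z ^ (c-1) * z ^ (c * (l:ℝ) - (k:ℝ)) = z ^ (c * ((l:ℝ)+1) - ((k:ℝ)+1)) := by
      rw [hzz]; congr 1; ring
    calc -(A * (c * z ^ (c-1))) * (Bco A c k l * z ^ (c * (l:ℝ) - (k:ℝ)))
        = (-(A*c) * Bco A c k l) * (z ^ (c-1) * z ^ (c * (l:ℝ) - (k:ℝ))) := by ring
      _ = (-(A*c) * Bco A c k l) * z ^ (c * ((l:ℝ)+1) - ((k:ℝ)+1)) := by rw [this]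
  -- second RHS term, rewritten with exponent c*l - (k+1)
  set F : ℕ → ℝ := fun l => Bco A c k l * ((c * (l:ℝ) - (k:ℝ)) * z ^ (c * (l:ℝ) - ((k:ℝ)+1)))
    with hF
  have hsecond : ∑ l ∈ Finset.range (k + 1),
        Bco A c k l * ((c * (l:ℝ) - (k:ℝ)) * z ^ (c * (l:ℝ) - (k:ℝ) - 1))
      = ∑ l ∈ Finset.range (k + 1), F l := by
    refine Finset.sum_congr rfl fun l hl => ?_
    rw [hF]
    simp only []
    rw [sub_sub]
  have hFsum : ∑ l ∈ Finset.range (k + 2), F l = ∑ l ∈ Finset.range (k + 1), F l := by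
    rw [Finset.sum_range_succ]
    have : F (k+1) = 0 := by
      rw [hF]
      simp only []
      rw [Bco_eq_zero A c k (k+1) (Nat.lt_succ_self k), zero_mul]
    rw [this, add_zero]
  rw [hfirst, hsecond, ← hFsum]
  rw [Finset.sum_range_succ' (fun l => Bco A c (k+1) l * z ^ (c * (l:ℝ) - ((k:ℝ)+1))) (k+1),
      Finset.sum_range_succ' F (k+1)]
  rw [← add_assoc]
  congr 1
  · rw [← Finset.sum_add_distrib]
    refine Finset.sum_congr rfl fun l hl => ?_
    rw [hF]
    simp only []
    rw [Bco_succ_succ]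
    push_cast
    ring
  · rw [hF]
    simp only []
    rw [Bco_succ_zero]
    push_cast
    ring
lemma main_ind (A c : ℝ) (k : ℕ) :
    ∀ z ∈ Set.Ioi (0:ℝ),
      iteratedDeriv k (fun w : ℝ => Real.exp (-(A * w ^ c))) z
        = Real.exp (-(A * z ^ c)) *
            ∑ l ∈ Finset.range (k + 1), Bco A c k l * z ^ (c * (l:ℝ) - (k:ℝ)) := by
  induction k with
  | zero =>
    intro z hz
    rw [iteratedDeriv_zero]
    have hB : Bco A c 0 0 = 1 := by
      unfold Bco Ssum
      simp [descPochhammer]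
    rw [Finset.sum_range_one, hB]
    norm_num
  | succ k IH =>
    intro z hz
    have hz' : (0:ℝ) < z := hz
    rw [iteratedDeriv_succ]
    have hev : iteratedDeriv k (fun w : ℝ => Real.exp (-(A * w ^ c)))
        =ᶠ[nhds z] fun w => Real.exp (-(A * w ^ c)) *
            ∑ l ∈ Finset.range (k + 1), Bco A c k l * w ^ (c * (l:ℝ) - (k:ℝ)) := by
      filter_upwards [isOpen_Ioi.mem_nhds hz] with w hw
      exact IH w hw
    rw [hev.deriv_eq]
    have h1 : HasDerivAt (fun w : ℝ => w ^ c) (c * z ^ (c - 1)) z :=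
      Real.hasDerivAt_rpow_const (Or.inl hz'.ne')
    have h3 : HasDerivAt (fun w : ℝ => Real.exp (-(A * w ^ c)))
        (Real.exp (-(A * z ^ c)) * (-(A * (c * z ^ (c - 1))))) z :=
      ((h1.const_mul A).neg).exp
    have h4 : HasDerivAt
        (fun w : ℝ => ∑ l ∈ Finset.range (k + 1), Bco A c k l * w ^ (c * (l:ℝ) - (k:ℝ)))
        (∑ l ∈ Finset.range (k + 1),
          Bco A c k l * ((c * (l:ℝ) - (k:ℝ)) * z ^ (c * (l:ℝ) - (k:ℝ) - 1))) z := by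
      apply HasDerivAt.fun_sum
      intro l hl
      exact (Real.hasDerivAt_rpow_const (Or.inl hz'.ne')).const_mul _
    have h5 := h3.fun_mul h4
    rw [h5.deriv]
    have hexp : ∀ l ∈ Finset.range (k + 2),
        Bco A c (k+1) l * z ^ (c * (l:ℝ) - ((k+1 : ℕ):ℝ))
          = Bco A c (k+1) l * z ^ (c * (l:ℝ) - ((k:ℝ)+1)) := by
      intro l hl
      push_cast
      ring_nf
    rw [show k + 1 + 1 = k + 2 from rfl, Finset.sum_congr rfl hexp, key7 A c k z hz']
    ring

/-- Equation (18) of the paper: for `0 < c < 1` and `ζ > 0`, the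
`k`-th derivative at `ζ` of `ζ ↦ exp(-A ζ^c)` equals
`exp(-A ζ^c) Σ_{l=0}^{k} (1/l!) Σ_{j=0}^{l} (-1)^{l+j} C(l,j) A^l (c(l-j))_{(k)} ζ^{cl-k}`. -/
theorem stmt_18 (A c : ℝ) (hc0 : 0 < c) (hc1 : c < 1) (k : ℕ) (ζ : ℝ) (hζ : 0 < ζ) :
    iteratedDeriv k (fun z : ℝ => Real.exp (-(A * z ^ c))) ζ
      = Real.exp (-(A * ζ ^ c)) *
          ∑ l ∈ Finset.range (k + 1), (1 / (l.factorial : ℝ)) *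
            ∑ j ∈ Finset.range (l + 1),
              (-1 : ℝ) ^ (l + j) * (l.choose j : ℝ) * A ^ l *
                (descPochhammer ℝ k).eval (c * ((l : ℝ) - (j : ℝ))) *
                ζ ^ (c * (l : ℝ) - (k : ℝ)) := by
  rw [main_ind A c k ζ hζ]
  congr 1
  refine Finset.sum_congr rfl fun l hl => ?_
  rw [Bco, Ssum, mul_assoc, Finset.sum_mul]
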